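/- For any integers m, n, the points O = (0,0,0), P = (7m - 4n, 5n, -m - 3n), Q = (3m - 7n, 5m, -4m + n) form an equilateral triangle with side length 5√(2(m² - mn + n²)), and P, Q lie in the plane x + 5y + 7z = 0. -/
import Mathlib

/-- Parametrization of the family in the plane x + 5y + 7z = 0: the points
`O`, `P`, `Q` form an equilateral triangle of side length `5√(2(m²-mn+n²))`. -/
theorem T_param_11 (m n : ℤ) :
    (7*m - 4*n) ^ 2 + (5*n) ^ 2 + (-m - 3*n) ^ 2 = 2 * 5 ^ 2 * (m ^ 2 - m * n + n ^ 2) ∧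
    (3*m - 7*n) ^ 2 + (5*m) ^ 2 + (-4*m + n) ^ 2 = 2 * 5 ^ 2 * (m ^ 2 - m * n + n ^ 2) ∧
    ((7*m - 4*n) - (3*m - 7*n)) ^ 2 + ((5*n) - (5*m)) ^ 2 + ((-m - 3*n) - (-4*m + n)) ^ 2
      = 2 * 5 ^ 2 * (m ^ 2 - m * n + n ^ 2) ∧
    Real.sqrt (((7*m - 4*n : ℤ) : ℝ) ^ 2 + ((5*n : ℤ) : ℝ) ^ 2 + ((-m - 3*n : ℤ) : ℝ) ^ 2)
      = 5 * Real.sqrt (2 * ((m : ℝ) ^ 2 - m * n + n ^ 2)) ∧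
    (7*m - 4*n) + 5 * (5*n) + 7 * (-m - 3*n) = 0 ∧ (3*m - 7*n) + 5 * (5*m) + 7 * (-4*m + n) = 0 := by
  refine ⟨by ring, by ring, by ring, ?_, by ring, by ring⟩
  have h : (((7*m - 4*n : ℤ) : ℝ) ^ 2 + ((5*n : ℤ) : ℝ) ^ 2 + ((-m - 3*n : ℤ) : ℝ) ^ 2)
      = 5 ^ 2 * (2 * ((m : ℝ) ^ 2 - m * n + n ^ 2)) := by push_cast; ring
  rw [h, Real.sqrt_mul (by positivity), Real.sqrt_sq (by norm_num)]
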